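/- The radial projection p(x) = x if ‖x‖ ≤ 1, p(x) = x/‖x‖ if ‖x‖ > 1, onto the unit ball of a Minkowski plane is non-expansive with respect to the antinorm: ‖p(v) − p(w)‖ₐ ≤ ‖v − w‖ₐ for all v, w ∈ V. -/

import Mathlib

/-- The antinorm associated with a norm and a symplectic form `ω`:
`anorm ω x = sup {ω x y : ‖y‖ = 1}`. -/
noncomputable def anorm {V : Type*} [NormedAddCommGroup V] [NormedSpace ℝ V]
    (ω : V →ₗ[ℝ] V →ₗ[ℝ] ℝ) (x : V) : ℝ :=
  sSup {r : ℝ | ∃ y : V, ‖y‖ = 1 ∧ r = ω x y}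

/-- Birkhoff normality: `x ⊣ y` iff `‖x‖ ≤ ‖x + t • y‖` for all `t`. -/
def BNormal {V : Type*} [NormedAddCommGroup V] [NormedSpace ℝ V] (x y : V) : Prop :=
  ∀ t : ℝ, ‖x‖ ≤ ‖x + t • y‖

/-- The radial projection onto the unit ball of the norm. -/
noncomputable def radialProj {V : Type*} [NormedAddCommGroup V] [NormedSpace ℝ V]
    (x : V) : V :=
  if ‖x‖ ≤ 1 then x else ‖x‖⁻¹ • x

section AntinormAux

variable {V : Type*} [NormedAddCommGroup V] [NormedSpace ℝ V]

lemma anorm_set_eq (ω : V →ₗ[ℝ] V →ₗ[ℝ] ℝ) (x : V) :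
    {r : ℝ | ∃ y : V, ‖y‖ = 1 ∧ r = ω x y} = (fun y : V => ω x y) '' Metric.sphere (0:V) 1 := by
  ext r
  simp only [Set.mem_setOf_eq, Set.mem_image, mem_sphere_zero_iff_norm]
  constructor
  · rintro ⟨y, hy, rfl⟩; exact ⟨y, hy, rfl⟩
  · rintro ⟨y, hy, rfl⟩; exact ⟨y, hy, rfl⟩

variable [FiniteDimensional ℝ V] [Nontrivial V]

lemma anorm_exists_max (ω : V →ₗ[ℝ] V →ₗ[ℝ] ℝ) (x : V) :
    ∃ y : V, ‖y‖ = 1 ∧ ω x y = anorm ω x := by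
  have hcont : Continuous fun y : V => ω x y := (ω x).continuous_of_finiteDimensional
  have hne : (Metric.sphere (0:V) 1).Nonempty := by
    obtain ⟨z, hz⟩ := exists_norm_eq V (zero_le_one)
    exact ⟨z, by simpa [mem_sphere_zero_iff_norm] using hz⟩
  obtain ⟨y, hy, hmax⟩ := (isCompact_sphere (0:V) 1).exists_isMaxOn hne hcont.continuousOn
  have hy1 : ‖y‖ = 1 := by simpa [mem_sphere_zero_iff_norm] using hy
  refine ⟨y, hy1, ?_⟩
  have hgreat : IsGreatest ((fun y : V => ω x y) '' Metric.sphere (0:V) 1) (ω x y) := by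
    constructor
    · exact ⟨y, hy, rfl⟩
    · rintro r ⟨z, hz, rfl⟩
      exact hmax hz
  rw [anorm, anorm_set_eq]
  exact (hgreat.csSup_eq).symm

lemma anorm_bddAbove (ω : V →ₗ[ℝ] V →ₗ[ℝ] ℝ) (x : V) :
    BddAbove {r : ℝ | ∃ y : V, ‖y‖ = 1 ∧ r = ω x y} := by
  rw [anorm_set_eq]
  have hcont : Continuous fun y : V => ω x y := (ω x).continuous_of_finiteDimensional
  exact ((isCompact_sphere (0:V) 1).image hcont).bddAbove

lemma le_anorm (ω : V →ₗ[ℝ] V →ₗ[ℝ] ℝ) (x : V) {y : V} (hy : ‖y‖ = 1) :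
    ω x y ≤ anorm ω x :=
  le_csSup (anorm_bddAbove ω x) ⟨y, hy, rfl⟩

lemma anorm_nonneg (ω : V →ₗ[ℝ] V →ₗ[ℝ] ℝ) (x : V) : 0 ≤ anorm ω x := by
  obtain ⟨z, hz⟩ := exists_norm_eq V (zero_le_one)
  have h1 : ω x z ≤ anorm ω x := le_anorm ω x hz
  have h2 : ω x (-z) ≤ anorm ω x := le_anorm ω x (by simpa using hz)
  rw [map_neg] at h2
  linarith

lemma anorm_neg (ω : V →ₗ[ℝ] V →ₗ[ℝ] ℝ) (x : V) : anorm ω (-x) = anorm ω x := by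
  have key : ∀ z : V, anorm ω (-z) ≤ anorm ω z := by
    intro z
    obtain ⟨y, hy, hmax⟩ := anorm_exists_max ω (-z)
    rw [← hmax]
    have h : ω (-z) y = ω z (-y) := by simp
    rw [h]
    exact le_anorm ω z (by simpa using hy)
  have h1 := key x
  have h2 := key (-x)
  rw [neg_neg] at h2
  linarith

lemma anorm_smul (ω : V →ₗ[ℝ] V →ₗ[ℝ] ℝ) (x : V) {c : ℝ} (hc : 0 ≤ c) :
    anorm ω (c • x) = c * anorm ω x := by
  obtain ⟨y, hy, hmax⟩ := anorm_exists_max ω x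
  apply le_antisymm
  · have hne : Set.Nonempty {r : ℝ | ∃ z : V, ‖z‖ = 1 ∧ r = ω (c • x) z} :=
      ⟨ω (c • x) y, ⟨y, hy, rfl⟩⟩
    apply csSup_le hne
    rintro r ⟨z, hz, rfl⟩
    have h : ω (c • x) z = c * ω x z := by simp
    rw [h]
    exact mul_le_mul_of_nonneg_left (le_anorm ω x hz) hc
  · have h : c * anorm ω x = ω (c • x) y := by simp [hmax]
    rw [h]
    exact le_anorm ω (c • x) hy

lemma anorm_zero (ω : V →ₗ[ℝ] V →ₗ[ℝ] ℝ) : anorm ω (0:V) = 0 := by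
  have h := anorm_smul ω (0:V) (le_refl (0:ℝ))
  simpa using h

end AntinormAux

section Core

variable {V : Type*} [NormedAddCommGroup V] [NormedSpace ℝ V]

lemma omega_skew (ω : V →ₗ[ℝ] V →ₗ[ℝ] ℝ) (halt : ∀ x : V, ω x x = 0) (x y : V) :
    ω y x = - ω x y := by
  have h := halt (x + y)
  simp only [map_add, LinearMap.add_apply, halt] at h
  linarith

/-- In a 2-dim space, if `ω a b ≠ 0` and `z` is killed by both `ω a` and `ω b`, then `z = 0`. -/
lemma omega_reg (ω : V →ₗ[ℝ] V →ₗ[ℝ] ℝ) (hdim : Module.finrank ℝ V = 2)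
    (halt : ∀ x : V, ω x x = 0)
    (hnd : ∀ a : V, (∀ y : V, ω a y = 0) → a = 0)
    {a b z : V} (hab : ω a b ≠ 0) (hz1 : ω a z = 0) (hz2 : ω b z = 0) : z = 0 := by
  haveI := FiniteDimensional.of_finrank_eq_succ (n := 1) hdim
  have hli : LinearIndependent ℝ ![a, b] := by
    rw [LinearIndependent.pair_iff]
    intro s t hst
    have h1 : ω a (s • a + t • b) = 0 := by rw [hst]; simp
    have h2 : ω b (s • a + t • b) = 0 := by rw [hst]; simp
    simp only [map_add, map_smul, smul_eq_mul, halt] at h1 h2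
    have hba : ω b a = - ω a b := omega_skew ω halt a b
    rw [hba] at h2
    constructor
    · rcases mul_eq_zero.mp (show s * ω a b = 0 by linarith) with h | h
      · exact h
      · exact absurd h hab
    · rcases mul_eq_zero.mp (show t * ω a b = 0 by linarith) with h | h
      · exact h
      · exact absurd h hab
  have hsp : Submodule.span ℝ ({a, b} : Set V) = ⊤ := by
    apply Submodule.eq_top_of_finrank_eq
    rw [hdim]
    have hr : Set.range ![a, b] = {a, b} := by
      simp [Matrix.range_cons, Matrix.range_empty, Set.pair_comm]
    rw [← hr, finrank_span_eq_card hli]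
    simp
  apply hnd z
  intro y
  have hy : y ∈ Submodule.span ℝ ({a, b} : Set V) := hsp ▸ Submodule.mem_top
  rw [Submodule.mem_span_pair] at hy
  obtain ⟨s, t, rfl⟩ := hy
  have hza : ω z a = - ω a z := omega_skew ω halt a z
  have hzb : ω z b = - ω b z := omega_skew ω halt b z
  simp only [map_add, map_smul, smul_eq_mul, hza, hzb, hz1, hz2]
  ring

/-- The key geometric claim: the sup of `ω (u-w) ·` over the unit sphere is attained at some
`y` with `ω u y ≥ 0`, provided `‖u‖ = 1` and `‖w‖ ≤ 1`. -/
lemma key_claim (ω : V →ₗ[ℝ] V →ₗ[ℝ] ℝ) (hdim : Module.finrank ℝ V = 2)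
    (halt : ∀ x : V, ω x x = 0)
    (hnd : ∀ a : V, (∀ y : V, ω a y = 0) → a = 0)
    {u w : V} (hu : ‖u‖ = 1) (hw : ‖w‖ ≤ 1) (hne : u ≠ w) :
    ∃ y : V, ‖y‖ = 1 ∧ ω (u - w) y = anorm ω (u - w) ∧ 0 ≤ ω u y := by
  haveI := FiniteDimensional.of_finrank_eq_succ (n := 1) hdim
  haveI : Nontrivial V := Module.nontrivial_of_finrank_pos (R := ℝ) (by omega)
  haveI : CompleteSpace V := FiniteDimensional.complete ℝ V
  set a : V := u - w with ha
  have ha0 : a ≠ 0 := sub_ne_zero.mpr hne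
  set M : ℝ := anorm ω a with hM
  obtain ⟨ys, hys, hysmax⟩ := anorm_exists_max ω a
  -- M > 0
  have hMpos : 0 < M := by
    have hex : ¬ (∀ y : V, ω a y = 0) := fun H => ha0 (hnd a H)
    push_neg at hex
    obtain ⟨y₀, hy₀⟩ := hex
    have hy₀0 : y₀ ≠ 0 := by
      intro h; rw [h] at hy₀; simp at hy₀
    have hn : (0:ℝ) < ‖y₀‖ := norm_pos_iff.mpr hy₀0
    rcases lt_or_gt_of_ne hy₀ with hneg | hpos
    · have hy1 : ‖(-(‖y₀‖⁻¹ • y₀))‖ = 1 := by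
        rw [norm_neg, norm_smul, norm_inv, norm_norm, inv_mul_cancel₀ hn.ne']
      have hle := le_anorm ω a hy1
      have hval : ω a (-(‖y₀‖⁻¹ • y₀)) = -(‖y₀‖⁻¹ * ω a y₀) := by simp
      rw [hval] at hle
      have hpos' : 0 < -(‖y₀‖⁻¹ * ω a y₀) := by
        rw [neg_pos]
        exact mul_neg_of_pos_of_neg (by positivity) hneg
      linarith
    · have hy1 : ‖(‖y₀‖⁻¹ • y₀)‖ = 1 := by
        rw [norm_smul, norm_inv, norm_norm, inv_mul_cancel₀ hn.ne']
      have hle := le_anorm ω a hy1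
      have hval : ω a (‖y₀‖⁻¹ • y₀) = ‖y₀‖⁻¹ * ω a y₀ := by simp
      rw [hval] at hle
      have hpos' : 0 < ‖y₀‖⁻¹ * ω a y₀ := by positivity
      linarith
  -- |ω a u| ≤ M
  have hh1 : ω a u ≤ M := le_anorm ω a hu
  have hh2 : - M ≤ ω a u := by
    have h := le_anorm ω a (show ‖-u‖ = 1 by simpa using hu)
    rw [map_neg] at h
    linarith
  by_cases hcase : ω a u = M
  · exact ⟨u, hu, hcase, le_of_eq (halt u).symm⟩
  by_cases hcase' : ω a u = -M
  · refine ⟨-u, by simpa using hu, ?_, ?_⟩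
    · rw [map_neg, hcase']; ring
    · rw [map_neg, halt u]; simp
  have habs : |ω a u| < M := by
    rw [abs_lt]
    exact ⟨lt_of_le_of_ne hh2 (Ne.symm hcase'), lt_of_le_of_ne hh1 hcase⟩
  by_cases hpos : 0 ≤ ω u ys
  · exact ⟨ys, hys, hysmax, hpos⟩
  exfalso
  push_neg at hpos
  set c : ℝ := -(ω u ys) / M with hc
  have hcpos : 0 < c := div_pos (neg_pos.mpr hpos) hMpos
  set r : V := u + c • a with hr
  have hra : ω a r = ω a u := by
    simp [hr, map_add, map_smul, halt a]
  have hya : ω ys a = - M := by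
    rw [omega_skew ω halt a ys, hysmax]
  have hry : ω ys r = 0 := by
    have h1 : ω ys u = - ω u ys := omega_skew ω halt u ys
    simp only [hr, map_add, map_smul, smul_eq_mul, hya, h1]
    field_simp [hc]
    rw [hc, div_mul_cancel₀ _ hMpos.ne']; ring
  -- r = (ω a u / M) • ys
  have hreq : r = (ω a u / M) • ys := by
    have hz1 : ω a (r - (ω a u / M) • ys) = 0 := by
      simp only [map_sub, map_smul, smul_eq_mul, hra, hysmax]
      field_simp
      rw [← hM]; ring
    have hz2 : ω ys (r - (ω a u / M) • ys) = 0 := by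
      simp only [map_sub, map_smul, smul_eq_mul, hry, halt ys]
      ring
    have hab : ω a ys ≠ 0 := by rw [hysmax]; exact hMpos.ne'
    have h0 := omega_reg ω hdim halt hnd hab hz1 hz2
    exact sub_eq_zero.mp h0
  have hrnorm : ‖r‖ < 1 := by
    rw [hreq, norm_smul, hys, mul_one]
    rw [Real.norm_eq_abs, abs_div, abs_of_pos hMpos]
    rw [div_lt_one hMpos]
    exact habs
  -- convex combination u = t • w + (1 - t) • r
  set t : ℝ := c / (1 + c) with htdef
  have h1c : (0:ℝ) < 1 + c := by linarith
  have ht0 : 0 < t := div_pos hcpos h1c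
  have ht1 : t < 1 := by
    rw [div_lt_one h1c]; linarith
  have hwa : w = u - a := by rw [ha]; abel
  have hcomb : u = t • w + (1 - t) • r := by
    rw [hwa, hr, htdef]
    match_scalars <;> (field_simp; try ring)
  -- dual functional
  have hu0 : u ≠ 0 := by
    intro h; rw [h, norm_zero] at hu; norm_num at hu
  obtain ⟨f, hf1, hfu⟩ := exists_dual_vector ℝ u (norm_ne_zero_iff.mpr hu0)
  have hfu1 : f u = 1 := by rw [hfu]; simp [hu]
  have hfw : f w ≤ 1 := by
    calc f w ≤ |f w| := le_abs_self _
    _ = ‖f w‖ := (Real.norm_eq_abs _).symm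
    _ ≤ ‖f‖ * ‖w‖ := f.le_opNorm w
    _ ≤ 1 := by rw [hf1, one_mul]; exact hw
  have hfr : f r < 1 := by
    calc f r ≤ |f r| := le_abs_self _
    _ = ‖f r‖ := (Real.norm_eq_abs _).symm
    _ ≤ ‖f‖ * ‖r‖ := f.le_opNorm r
    _ < 1 := by rw [hf1, one_mul]; exact hrnorm
  have hsum : (1:ℝ) = t * f w + (1 - t) * f r := by
    have := congrArg f hcomb
    rw [map_add, map_smul, map_smul] at this
    simpa [hfu1] using this
  nlinarith [mul_le_mul_of_nonneg_left hfw ht0.le,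
    mul_lt_mul_of_pos_left hfr (show (0:ℝ) < 1 - t by linarith)]

/-- Core non-expansiveness lemma: pulling `ρ • u` back to the sphere decreases the
antinorm distance to any point `w` of the unit ball. -/
lemma core_lemma (ω : V →ₗ[ℝ] V →ₗ[ℝ] ℝ) (hdim : Module.finrank ℝ V = 2)
    (halt : ∀ x : V, ω x x = 0)
    (hnd : ∀ a : V, (∀ y : V, ω a y = 0) → a = 0)
    {u w : V} {ρ : ℝ} (hu : ‖u‖ = 1) (hw : ‖w‖ ≤ 1) (hρ : 1 ≤ ρ) :
    anorm ω (u - w) ≤ anorm ω (ρ • u - w) := by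
  haveI := FiniteDimensional.of_finrank_eq_succ (n := 1) hdim
  haveI : Nontrivial V := Module.nontrivial_of_finrank_pos (R := ℝ) (by omega)
  by_cases hne : u = w
  · rw [hne, sub_self, anorm_zero]
    exact anorm_nonneg ω _
  obtain ⟨y, hy, hmax, hpos⟩ := key_claim ω hdim halt hnd hu hw hne
  have hval : ω (ρ • u - w) y = anorm ω (u - w) + (ρ - 1) * ω u y := by
    rw [← hmax]
    simp only [map_sub, map_smul, LinearMap.sub_apply, LinearMap.smul_apply, smul_eq_mul]
    ring
  calc anorm ω (u - w) ≤ ω (ρ • u - w) y := by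
        rw [hval]
        nlinarith
    _ ≤ anorm ω (ρ • u - w) := le_anorm ω _ hy

end Core

/-- (Karlovitz) The radial projection onto the unit ball is non-expansive with respect to
the antinorm. -/
theorem stmt19 {V : Type*} [NormedAddCommGroup V] [NormedSpace ℝ V]
    (hdim : Module.finrank ℝ V = 2)
    (ω : V →ₗ[ℝ] V →ₗ[ℝ] ℝ)
    (halt : ∀ x : V, ω x x = 0)
    (hnd : ∀ a : V, (∀ y : V, ω a y = 0) → a = 0) :
    ∀ v w : V, anorm ω (radialProj v - radialProj w) ≤ anorm ω (v - w) := by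
  haveI := FiniteDimensional.of_finrank_eq_succ (n := 1) hdim
  haveI : Nontrivial V := Module.nontrivial_of_finrank_pos (R := ℝ) (by omega)
  have key : ∀ v w : V, ‖w‖ ≤ ‖v‖ →
      anorm ω (radialProj v - radialProj w) ≤ anorm ω (v - w) := by
    intro v w hle
    by_cases hv : ‖v‖ ≤ 1
    · have hw : ‖w‖ ≤ 1 := le_trans hle hv
      rw [radialProj, radialProj, if_pos hv, if_pos hw]
    · push_neg at hv
      have hvpos : (0:ℝ) < ‖v‖ := lt_trans one_pos hv
      have hu : ‖(‖v‖⁻¹ • v)‖ = 1 := by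
        rw [norm_smul, norm_inv, norm_norm, inv_mul_cancel₀ hvpos.ne']
      by_cases hw : ‖w‖ ≤ 1
      · rw [radialProj, radialProj, if_neg (not_le.mpr hv), if_pos hw]
        have h := core_lemma ω hdim halt hnd hu hw hv.le
        have hsc : ‖v‖ • ‖v‖⁻¹ • v = v := by
          rw [smul_smul, mul_inv_cancel₀ hvpos.ne', one_smul]
        rwa [hsc] at h
      · push_neg at hw
        have hwpos : (0:ℝ) < ‖w‖ := lt_trans one_pos hw
        rw [radialProj, radialProj, if_neg (not_le.mpr hv), if_neg (not_le.mpr hw)]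
        have hz : ‖(‖w‖⁻¹ • w)‖ = 1 := by
          rw [norm_smul, norm_inv, norm_norm, inv_mul_cancel₀ hwpos.ne']
        have hρ : 1 ≤ ‖v‖ / ‖w‖ := (one_le_div hwpos).mpr hle
        have h := core_lemma ω hdim halt hnd hu (le_of_eq hz) hρ
        have hsc : (‖v‖ / ‖w‖) • ‖v‖⁻¹ • v = ‖w‖⁻¹ • v := by
          rw [smul_smul]
          congr 1
          field_simp
        rw [hsc] at h
        have hfac : (‖w‖⁻¹ • v) - (‖w‖⁻¹ • w) = ‖w‖⁻¹ • (v - w) := by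
          rw [smul_sub]
        rw [hfac, anorm_smul ω (v - w) (by positivity : (0:ℝ) ≤ ‖w‖⁻¹)] at h
        calc anorm ω (‖v‖⁻¹ • v - ‖w‖⁻¹ • w) ≤ ‖w‖⁻¹ * anorm ω (v - w) := h
          _ ≤ 1 * anorm ω (v - w) := by
              apply mul_le_mul_of_nonneg_right _ (anorm_nonneg ω _)
              rw [inv_le_one_iff₀]  -- maybe wrong name
              right; exact hw.le
          _ = anorm ω (v - w) := one_mul _
  intro v w
  rcases le_total ‖w‖ ‖v‖ with h | h
  · exact key v w h
  · have h2 := key w v h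
    have e1 : anorm ω (radialProj v - radialProj w) = anorm ω (radialProj w - radialProj v) := by
      rw [← anorm_neg ω (radialProj w - radialProj v), neg_sub]
    have e2 : anorm ω (w - v) = anorm ω (v - w) := by
      rw [← anorm_neg ω (v - w), neg_sub]
    rw [e1, ← e2]
    exact h2
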